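/- Let f be an excursion and let s,t ∈ [0,1] with s ≤ t. Then inf_{[s ∧_f t, t]} f = inf_{[s,t]} f, and s ∧_f t = sup{r ≤ s : r ⪯_f t} = sup{r ≤ s : f(r−) ≤ inf_{[s,t]} f}. -/

import Mathlib

open Set Filter Topology
open scoped Classical

noncomputable section

/-- Left limit of `f` at `t`, with the convention `f(0−) = 0`. -/
def lm (f : ℝ → ℝ) (t : ℝ) : ℝ := if t = 0 then 0 else Function.leftLim f t

/-- The jump `Δ_t(f) = f t − f(t−)`. -/
def jump (f : ℝ → ℝ) (t : ℝ) : ℝ := f t - lm f t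

/-- `inf_{[s,t]} f`. -/
def infIcc (f : ℝ → ℝ) (s t : ℝ) : ℝ := sInf (f '' Icc s t)

/-- An excursion: a càdlàg function on `[0,1]`, nonnegative, vanishing at `1` (and
extended by `0` outside `[0,1]`), all of whose jumps are nonnegative. -/
structure IsExcursion (f : ℝ → ℝ) : Prop where
  nonneg : ∀ t ∈ Icc (0:ℝ) 1, 0 ≤ f t
  zero_outside : ∀ t, t ∉ Icc (0:ℝ) 1 → f t = 0
  rightCont : ∀ t ∈ Ico (0:ℝ) 1, Tendsto f (𝓝[>] t) (𝓝 (f t))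
  leftLimEx : ∀ t ∈ Ioc (0:ℝ) 1, Tendsto f (𝓝[<] t) (𝓝 (Function.leftLim f t))
  one : f 1 = 0
  jump_nonneg : ∀ t ∈ Icc (0:ℝ) 1, 0 ≤ jump f t

/-- The genealogical relation `s ⪯_f t` : `s ≤ t` and `f(s−) ≤ inf_{[s,t]} f`. -/
def pre (f : ℝ → ℝ) (s t : ℝ) : Prop := s ≤ t ∧ lm f s ≤ infIcc f s t

/-- `x_s^t(f) = 1_{s ≤ t} · max(inf_{[s,t]} f − f(s−), 0)`. -/
def xst (f : ℝ → ℝ) (s t : ℝ) : ℝ := if s ≤ t then max (infIcc f s t - lm f s) 0 else 0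

/-- The most recent common ancestor `s ∧_f t`. -/
def mrca (f : ℝ → ℝ) (s t : ℝ) : ℝ := sSup {r : ℝ | 0 ≤ r ∧ pre f r s ∧ pre f r t}

/-- `δ_t(a,b) = min(|a−b|, Δ_t(f) − |a−b|)`, the circle pseudo-distance on `[0, Δ_t(f)]`. -/
def cdel (f : ℝ → ℝ) (t a b : ℝ) : ℝ := min |a - b| (jump f t - |a - b|)

/-- `d_O(s,t) = ∑_{s ≺_f r ⪯_f t} δ_r(0, x_r^t)`. -/
def dO (f : ℝ → ℝ) (s t : ℝ) : ℝ :=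
  ∑' r : ℝ, if pre f s r ∧ s < r ∧ pre f r t then cdel f r 0 (xst f r t) else 0

/-- `d_T(s,t) = f t − inf_{[s,t]} f − ∑_{s ≺_f r ⪯_f t} x_r^t`, intended for `s ⪯_f t`. -/
def dTanc (f : ℝ → ℝ) (s t : ℝ) : ℝ :=
  f t - infIcc f s t - ∑' r : ℝ, if pre f s r ∧ s < r ∧ pre f r t then xst f r t else 0

/-- The looptree pseudo-distance `d_L[f]`. -/
def dL (f : ℝ → ℝ) (s t : ℝ) : ℝ :=
  cdel f (mrca f s t) (xst f (mrca f s t) s) (xst f (mrca f s t) t)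
    + dO f (mrca f s t) s + dO f (mrca f s t) t

/-- The tree pseudo-distance `d_T[f]`. -/
def dT (f : ℝ → ℝ) (s t : ℝ) : ℝ := dTanc f (mrca f s t) s + dTanc f (mrca f s t) t

/-- The vernation pseudo-distance `d_V[f] = d_T[f] + 2·d_L[f]`. -/
def dV (f : ℝ → ℝ) (s t : ℝ) : ℝ := dT f s t + 2 * dL f s t

/-- `Jf(t) = ∑_{r ⪯_f t} x_r^t(f)`. -/
def Jop (f : ℝ → ℝ) (t : ℝ) : ℝ := ∑' r : ℝ, if pre f r t then xst f r t else 0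

/-- `J^ε f(t) = ∑_{r ⪯_f t, Δ_r(f) ≥ ε} x_r^t(f)`. -/
def Jeps (f : ℝ → ℝ) (ε : ℝ) (t : ℝ) : ℝ :=
  ∑' r : ℝ, if pre f r t ∧ ε ≤ jump f r then xst f r t else 0

/-- Pure jump growth (PJG) excursion: `f(t) = ∑_{r ⪯_f t} x_r^t(f)` on `[0,1]`. -/
def IsPJG (f : ℝ → ℝ) : Prop := ∀ t ∈ Icc (0:ℝ) 1, f t = Jop f t

/-- An increasing bijection from `[0,1]` onto itself. -/
def IncBij (l : ℝ → ℝ) : Prop :=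
  StrictMonoOn l (Icc (0:ℝ) 1) ∧ Set.BijOn l (Icc (0:ℝ) 1) (Icc (0:ℝ) 1)

/-- The Skorokhod distance `ρ` on functions `[0,1] → ℝ`. -/
def skor (f g : ℝ → ℝ) : ℝ :=
  sInf {c : ℝ | 0 ≤ c ∧ ∃ l : ℝ → ℝ, IncBij l ∧
    ∀ x ∈ Icc (0:ℝ) 1, |l x - x| ≤ c ∧ |f x - g (l x)| ≤ c}


lemma exc_nonneg {f : ℝ → ℝ} (hf : IsExcursion f) (x : ℝ) : 0 ≤ f x := by
  by_cases h : x ∈ Icc (0:ℝ) 1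
  · exact hf.nonneg x h
  · rw [hf.zero_outside x h]

lemma bddBelow_img {f : ℝ → ℝ} (hf : IsExcursion f) (a b : ℝ) :
    BddBelow (f '' Icc a b) :=
  ⟨0, by rintro y ⟨x, -, rfl⟩; exact exc_nonneg hf x⟩

lemma infIcc_le {f : ℝ → ℝ} (hf : IsExcursion f) {a b x : ℝ} (hx : x ∈ Icc a b) :
    infIcc f a b ≤ f x := csInf_le (bddBelow_img hf a b) ⟨x, hx, rfl⟩

lemma le_infIcc {f : ℝ → ℝ} {a b c : ℝ} (hab : a ≤ b)
    (h : ∀ x ∈ Icc a b, c ≤ f x) : c ≤ infIcc f a b :=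
  le_csInf ((nonempty_Icc.mpr hab).image f) (by rintro y ⟨x, hx, rfl⟩; exact h x hx)

lemma infIcc_nonneg {f : ℝ → ℝ} (hf : IsExcursion f) {a b : ℝ} (hab : a ≤ b) :
    0 ≤ infIcc f a b := le_infIcc hab fun x _ => exc_nonneg hf x

lemma infIcc_subset_le {f : ℝ → ℝ} (hf : IsExcursion f) {a b a' b' : ℝ}
    (h : Icc a b ⊆ Icc a' b') (hab : a ≤ b) : infIcc f a' b' ≤ infIcc f a b :=
  csInf_le_csInf (bddBelow_img hf a' b') ((nonempty_Icc.mpr hab).image f)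
    (image_mono (f := f) h)

lemma lm_le_self {f : ℝ → ℝ} (hf : IsExcursion f) {x : ℝ} (hx : x ∈ Icc (0:ℝ) 1) :
    lm f x ≤ f x := by
  have := hf.jump_nonneg x hx
  rw [jump] at this
  linarith

theorem statement1 (f : ℝ → ℝ) (hf : IsExcursion f) (s t : ℝ)
    (hs : s ∈ Icc (0:ℝ) 1) (ht : t ∈ Icc (0:ℝ) 1) (hst : s ≤ t) :
    infIcc f (mrca f s t) t = infIcc f s t ∧
    mrca f s t = sSup {r : ℝ | 0 ≤ r ∧ r ≤ s ∧ pre f r t} ∧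
    mrca f s t = sSup {r : ℝ | 0 ≤ r ∧ r ≤ s ∧ lm f r ≤ infIcc f s t} := by
  obtain ⟨hs0, hs1⟩ := hs
  obtain ⟨ht0, ht1⟩ := ht
  set I := infIcc f s t with hIdef
  have hI0 : 0 ≤ I := infIcc_nonneg hf hst
  set C := {r : ℝ | 0 ≤ r ∧ r ≤ s ∧ lm f r ≤ I} with hCdef
  have hC0 : (0:ℝ) ∈ C := ⟨le_rfl, hs0, by rw [lm, if_pos rfl]; exact hI0⟩
  have hCne : C.Nonempty := ⟨0, hC0⟩
  have hCbdd : BddAbove C := ⟨s, fun r hr => hr.2.1⟩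
  set m := sSup C with hmdef
  have hm0 : 0 ≤ m := le_csSup hCbdd hC0
  have hms : m ≤ s := csSup_le hCne fun r hr => hr.2.1
  have hmt : m ≤ t := hms.trans hst
  have hm1 : m ≤ 1 := hms.trans hs1
  have hub : ∀ r ∈ C, r ≤ m := fun r hr => le_csSup hCbdd hr
  -- f u ≥ I for m < u ≤ s
  have key2 : ∀ u, m < u → u ≤ s → I ≤ f u := by
    intro u hmu hus
    by_contra hlt
    push_neg at hlt
    have huC : u ∈ C := ⟨hm0.trans hmu.le, hus,
      (lm_le_self hf ⟨hm0.trans hmu.le, hus.trans hs1⟩).trans hlt.le⟩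
    exact absurd (hub u huC) (not_le.mpr hmu)
  -- f m ≥ I
  have key2m : I ≤ f m := by
    rcases eq_or_lt_of_le hms with h | h
    · rw [h]; exact infIcc_le hf ⟨le_rfl, hst⟩
    · by_contra hlt
      push_neg at hlt
      have hrc := hf.rightCont m ⟨hm0, h.trans_le hs1⟩
      have hev : ∀ᶠ v in 𝓝[>] m, f v < I := hrc.eventually (gt_mem_nhds hlt)
      obtain ⟨b, hb, hsub⟩ := mem_nhdsGT_iff_exists_Ioo_subset.mp hev
      have hmb : m < b := hb
      set v := min ((m + b)/2) s with hv
      have hmv : m < v := lt_min (by linarith) h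
      have hvb : v < b := lt_of_le_of_lt (min_le_left _ _) (by linarith)
      have hvs : v ≤ s := min_le_right _ _
      have hv0 : 0 < v := lt_of_le_of_lt hm0 hmv
      have hll := hf.leftLimEx v ⟨hv0, hvs.trans hs1⟩
      have hE : ∀ᶠ u in 𝓝[<] v, f u ≤ I := by
        filter_upwards [Ioo_mem_nhdsLT hmv] with u hu
        exact (hsub ⟨hu.1, hu.2.trans hvb⟩).le
      have hlim : Function.leftLim f v ≤ I := le_of_tendsto hll hE
      have hvC : v ∈ C := ⟨hv0.le, hvs, by rw [lm, if_neg hv0.ne']; exact hlim⟩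
      exact absurd (hub v hvC) (not_le.mpr hmv)
  -- lm f m ≤ I
  have key1 : lm f m ≤ I := by
    rcases eq_or_lt_of_le hm0 with h0 | h0
    · rw [lm, if_pos h0.symm]; exact hI0
    · rw [lm, if_neg h0.ne']
      by_contra hgt
      push_neg at hgt
      set L := Function.leftLim f m with hLdef
      have hll := hf.leftLimEx m ⟨h0, hm1⟩
      have hev : ∀ᶠ u in 𝓝[<] m, (L + I)/2 < f u :=
        hll.eventually (lt_mem_nhds (by rw [← hLdef]; linarith))
      obtain ⟨a, ha, hsub⟩ := mem_nhdsLT_iff_exists_Ioo_subset.mp hev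
      have ha' : a < m := ha
      have hmax : max a 0 < m := max_lt ha' h0
      obtain ⟨r, hrC, hr⟩ := exists_lt_of_lt_csSup hCne hmax
      rcases eq_or_lt_of_le (hub r hrC) with he | hrm
      · have h3 := hrC.2.2
        rw [he, lm, if_neg h0.ne'] at h3
        linarith
      · have hr0 : 0 < r := lt_of_le_of_lt (le_max_right a 0) hr
        have hll' := hf.leftLimEx r ⟨hr0, ((hub r hrC).trans hm1)⟩
        have hE : ∀ᶠ u in 𝓝[<] r, (L + I)/2 ≤ f u := by
          filter_upwards [Ioo_mem_nhdsLT hr] with u hu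
          exact (hsub ⟨(le_max_left a 0).trans_lt hu.1, hu.2.trans hrm⟩).le
        have h2 : (L + I)/2 ≤ Function.leftLim f r := ge_of_tendsto hll' hE
        have h3 := hrC.2.2
        rw [lm, if_neg hr0.ne'] at h3
        linarith
  have hfI : ∀ u ∈ Icc m s, I ≤ f u := by
    intro u hu
    rcases eq_or_lt_of_le hu.1 with he | hlt
    · rw [← he]; exact key2m
    · exact key2 u hlt hu.2
  -- part 1
  have part1 : infIcc f m t = I := by
    apply le_antisymm
    · exact infIcc_subset_le hf (Icc_subset_Icc hms le_rfl) hst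
    · apply le_infIcc hmt
      intro u hu
      rcases le_or_gt u s with h | h
      · exact hfI u ⟨hu.1, h⟩
      · exact infIcc_le hf ⟨h.le, hu.2⟩
  have hpret : pre f m t := ⟨hmt, by rw [part1]; exact key1⟩
  have hpres : pre f m s := ⟨hms, le_infIcc hms fun u hu => key1.trans (hfI u hu)⟩
  -- set equalities
  have hAB : {r : ℝ | 0 ≤ r ∧ pre f r s ∧ pre f r t}
      = {r : ℝ | 0 ≤ r ∧ r ≤ s ∧ pre f r t} := by
    ext r
    constructor
    · rintro ⟨h0, hps, hpt⟩; exact ⟨h0, hps.1, hpt⟩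
    · rintro ⟨h0, hrs, hpt⟩
      exact ⟨h0, ⟨hrs, hpt.2.trans
        (infIcc_subset_le hf (Icc_subset_Icc le_rfl hst) hrs)⟩, hpt⟩
  have hBC : {r : ℝ | 0 ≤ r ∧ r ≤ s ∧ pre f r t} ⊆ C := by
    rintro r ⟨h0, hrs, hpt⟩
    exact ⟨h0, hrs, hpt.2.trans
      (infIcc_subset_le hf (Icc_subset_Icc hrs le_rfl) hst)⟩
  have hmB : m ∈ {r : ℝ | 0 ≤ r ∧ r ≤ s ∧ pre f r t} := ⟨hm0, hms, hpret⟩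
  have hBsup : sSup {r : ℝ | 0 ≤ r ∧ r ≤ s ∧ pre f r t} = m :=
    le_antisymm (csSup_le_csSup hCbdd ⟨m, hmB⟩ hBC)
      (le_csSup (hCbdd.mono hBC) hmB)
  have hmrca : mrca f s t = m := by rw [mrca, hAB, hBsup]
  refine ⟨by rw [hmrca]; exact part1, by rw [hmrca, hBsup], by rw [hmrca]⟩
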